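/- arXiv:2507.10168 — 2 statements merged into one kernel-verified Lean document; each statement's English description precedes it below -/
import Mathlib

section
/- Let S be a left cancellative monoid which is C*-regular on the boundary and which satisfies the following condition: for every g ∈ I_ℓ(S) and all X, X_1, …, X_m ∈ J(S) with X_i ⊆ X for all i such that X ∖ (X_1 ∪ ⋯ ∪ X_m) ⊆ dom g and g s = s for every s ∈ X ∖ (X_1 ∪ ⋯ ∪ X_m), there exist Y_1, …, Y_l ∈ J(S) (possibly l = 0), each fixed pointwise by g, such that {X_1, …, X_m, Y_1, …, Y_l} is a foundation set for X. Then S is strongly C*-regular on the boundary. -/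
open scoped Classical

namespace SgC

variable {M : Type*}

/-- Composition of partial maps (`g` after `f`). -/
def pcomp (g f : M → Option M) : M → Option M := fun s => (f s).bind g

/-- The canonical partial inverse of a partial map (the genuine inverse when the map
is injective on its domain, as is the case for all maps in the left inverse hull of a
left cancellative monoid). -/
noncomputable def pinv (f : M → Option M) : M → Option M :=
  fun t => if h : ∃ s, f s = some t then some h.choose else none

/-- Left translation `t ↦ s * t` as an everywhere-defined partial map. -/
def ptransl [Mul M] (s : M) : M → Option M := fun t => some (s * t)

/-- The identity partial map. -/
def pid : M → Option M := fun s => some s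

/-- The block `q⁻¹ ∘ p`: first multiply on the left by `p`, then remove `q` on the left. -/
noncomputable def pblock [Mul M] (p : M × M) : M → Option M :=
  pcomp (pinv (ptransl p.2)) (ptransl p.1)

/-- Membership in the left inverse hull `I_ℓ(M)`: `h` is of the form
`s₂ₙ⁻¹ s₂ₙ₋₁ ⋯ s₂⁻¹ s₁` for some `n ≥ 1` and `sᵢ ∈ M` (the list records the pairs
`(s₁,s₂), (s₃,s₄), …`, applied left to right). -/
def InInvHull [Mul M] (h : M → Option M) : Prop :=
  ∃ l : List (M × M), l ≠ [] ∧
    h = l.foldl (fun acc p => pcomp (pblock p) acc) pid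

/-- Membership in the inverse hull generated by translations by elements of `σ` only
(used for canonical copies of `I_ℓ(S)` inside partial maps of a larger monoid). -/
def InInvHullOn [Mul M] (σ : Set M) (h : M → Option M) : Prop :=
  ∃ l : List (M × M), l ≠ [] ∧ (∀ p ∈ l, p.1 ∈ σ ∧ p.2 ∈ σ) ∧
    h = l.foldl (fun acc p => pcomp (pblock p) acc) pid

/-- Domain of a partial map. -/
def pdom (h : M → Option M) : Set M := {s | h s ≠ none}

/-- `h` fixes the set `Y` pointwise (in particular `Y ⊆ dom h`). -/
def PFixes (h : M → Option M) (Y : Set M) : Prop := ∀ s ∈ Y, h s = some s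

/-- Preimage of a set under a partial map. -/
def ppre (h : M → Option M) (X : Set M) : Set M := {s | ∃ x ∈ X, h s = some x}

/-- Constructible right ideals: domains of elements of the left inverse hull. -/
def IsConstructible [Mul M] (X : Set M) : Prop := ∃ h, InInvHull h ∧ X = pdom h

/-- Membership in `J̄(S)`: sets of the form `X₀` or `X₀ ∖ (X₁ ∪ ⋯ ∪ Xₘ)` with all
`Xᵢ` constructible. -/
def IsConstructibleBar [Mul M] (X : Set M) : Prop :=
  ∃ (X₀ : Set M) (m : ℕ) (Xi : Fin m → Set M),
    IsConstructible X₀ ∧ (∀ i, IsConstructible (Xi i)) ∧ X = X₀ \ ⋃ i, Xi i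

/-- `Xi` is a foundation family for `X`: each `Xi i ⊆ X` and every nonempty
constructible right ideal contained in `X` intersects some `Xi i`. -/
def IsFoundation [Mul M] (X : Set M) {ι : Type*} (Xi : ι → Set M) : Prop :=
  (∀ i, Xi i ⊆ X) ∧
  ∀ Y : Set M, IsConstructible Y → Y.Nonempty → Y ⊆ X → ∃ i, (Y ∩ Xi i).Nonempty

/-- Strong C*-regularity. -/
def StronglyRegular (M : Type*) [Monoid M] : Prop :=
  ∀ (n : ℕ) (h : Fin n → M → Option M), (∀ k, InInvHull (h k)) →
  ∀ (m : ℕ) (X : Set M) (Xi : Fin m → Set M),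
    IsConstructible X → (∀ i, IsConstructible (Xi i)) →
    (X \ ⋃ i, Xi i).Nonempty →
    (X \ ⋃ i, Xi i) ⊆ ⋃ k, {s | h k s = some s} →
    ∃ (l : ℕ) (Y : Fin l → Set M) (kk : Fin l → Fin n),
      (∀ j, IsConstructible (Y j)) ∧
      (X \ ⋃ i, Xi i) ⊆ ⋃ j, Y j ∧
      ∀ j, PFixes (h (kk j)) (Y j)

/-- C*-regularity. -/
def Regular (M : Type*) [Monoid M] : Prop :=
  ∀ (n : ℕ) (h : Fin n → M → Option M), (∀ k, InInvHull (h k)) →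
  ∀ X : Set M, IsConstructibleBar X → X.Nonempty →
    X ⊆ ⋃ k, {s | h k s = some s} →
    ∃ (l : ℕ) (Y : Fin l → Set M) (kk : Fin l → Fin n),
      (∀ j, IsConstructibleBar (Y j)) ∧ X ⊆ ⋃ j, Y j ∧
      ∀ j, PFixes (h (kk j)) (Y j)

/-- Strong C*-regularity on the boundary. -/
def StronglyRegularOnBoundary (M : Type*) [Monoid M] : Prop :=
  ∀ (n : ℕ) (h : Fin n → M → Option M), (∀ k, InInvHull (h k)) →
  ∀ (m : ℕ) (X : Set M) (Xi : Fin m → Set M),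
    IsConstructible X → (∀ i, IsConstructible (Xi i)) → (∀ i, Xi i ⊆ X) →
    (X \ ⋃ i, Xi i).Nonempty →
    (X \ ⋃ i, Xi i) ⊆ ⋃ k, {s | h k s = some s} →
    ∃ (l : ℕ) (Y : Fin l → Set M) (kk : Fin l → Fin n),
      (∀ j, IsConstructible (Y j)) ∧ (∀ j, PFixes (h (kk j)) (Y j)) ∧
      IsFoundation X (Sum.elim Xi Y)

/-- C*-regularity on the boundary. -/
def RegularOnBoundary (M : Type*) [Monoid M] : Prop :=
  ∀ (n : ℕ) (h : Fin n → M → Option M), (∀ k, InInvHull (h k)) →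
  ∀ (m : ℕ) (X : Set M) (Xi : Fin m → Set M),
    IsConstructible X → (∀ i, IsConstructible (Xi i)) → (∀ i, Xi i ⊆ X) →
    (X \ ⋃ i, Xi i).Nonempty →
    (X \ ⋃ i, Xi i) ⊆ ⋃ k, {s | h k s = some s} →
    ∃ (l : ℕ) (Y : Fin l → Set M) (kk : Fin l → Fin n),
      (∀ j, IsConstructibleBar (Y j)) ∧ (∀ j, PFixes (h (kk j)) (Y j)) ∧
      IsFoundation X (Sum.elim Xi Y)

/-- The type of constructible right ideals `J(M)`. -/
def CIdeal (M : Type*) [Mul M] : Type _ := {X : Set M // IsConstructible X}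

/-- The character space `{0,1}^{J(M)}` with the topology of pointwise convergence. -/
abbrev CharSpace (M : Type*) [Mul M] : Type _ := CIdeal M → Bool

/-- The principal character `χ_s`. -/
noncomputable def princhar [Mul M] (s : M) : CharSpace M :=
  fun X => decide (s ∈ X.1)

/-- `Ω(M)`: the closure of the set of principal characters. -/
noncomputable def Omega (M : Type*) [Mul M] : Set (CharSpace M) :=
  closure (Set.range (princhar : M → CharSpace M))

/-- Filters on `J(M)`: nonempty collections of nonempty constructible ideals closed
under intersections and enlargements within `J(M)`. -/
def IsFilterOn [Mul M] (F : Set (CIdeal M)) : Prop :=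
  F.Nonempty ∧ (∀ X ∈ F, (X.1 : Set M).Nonempty) ∧
  (∀ X ∈ F, ∀ Y ∈ F, ∀ Z : CIdeal M, Z.1 = X.1 ∩ Y.1 → Z ∈ F) ∧
  (∀ X ∈ F, ∀ Y : CIdeal M, X.1 ⊆ Y.1 → Y ∈ F)

/-- Nonzero multiplicative `{0,1}`-valued maps on `J(M)`. -/
def IsChar [Mul M] (χ : CharSpace M) : Prop :=
  (∃ X, χ X = true) ∧
  ∀ X Y Z : CIdeal M, Z.1 = X.1 ∩ Y.1 → χ Z = (χ X && χ Y)

/-- Maximal characters: characters whose associated filter is maximal among filters. -/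
def IsMaximalChar [Mul M] (χ : CharSpace M) : Prop :=
  IsChar χ ∧ IsFilterOn {X | χ X = true} ∧
  ∀ G : Set (CIdeal M), IsFilterOn G → {X | χ X = true} ⊆ G → G = {X | χ X = true}

/-- The set of maximal characters `Ω_max(M)`. -/
def OmegaMax (M : Type*) [Mul M] : Set (CharSpace M) := {χ | IsMaximalChar χ}

/-- The boundary `∂Ω(M)`: the closure of the set of maximal characters. -/
noncomputable def BoundaryOmega (M : Type*) [Mul M] : Set (CharSpace M) :=
  closure (OmegaMax M)


section Stmt7Aux

/-! ### Basic algebra of partial maps -/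

theorem pcomp_assoc (f g k : M → Option M) :
    pcomp k (pcomp g f) = pcomp (pcomp k g) f := by
  funext s
  simp only [pcomp]
  cases f s <;> simp [pcomp]

theorem pcomp_pid_right (f : M → Option M) : pcomp f pid = f := by
  funext s; simp [pcomp, pid]

theorem pcomp_pid_left (f : M → Option M) : pcomp pid f = f := by
  funext s; simp only [pcomp, pid]; cases f s <;> simp [pid]

/-- The composite recorded by a list of blocks. -/
noncomputable def chainF [Mul M] (l : List (M × M)) : M → Option M :=
  l.foldl (fun acc p => pcomp (pblock p) acc) pid

theorem foldl_pcomp [Mul M] (l : List (M × M)) (a : M → Option M) :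
    l.foldl (fun acc p => pcomp (pblock p) acc) a = pcomp (chainF l) a := by
  induction l generalizing a with
  | nil => simp [chainF, pcomp_pid_left]
  | cons p l ih =>
      show l.foldl _ (pcomp (pblock p) a) = pcomp (chainF (p :: l)) a
      rw [ih]
      have h2 : chainF (p :: l) = pcomp (chainF l) (pblock p) := by
        show l.foldl _ (pcomp (pblock p) pid) = _
        rw [ih, pcomp_pid_right]
      rw [h2]
      exact pcomp_assoc _ _ _

theorem chainF_cons [Mul M] (p : M × M) (l : List (M × M)) :
    chainF (p :: l) = pcomp (chainF l) (pblock p) := by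
  show l.foldl _ (pcomp (pblock p) pid) = _
  rw [foldl_pcomp, pcomp_pid_right]

theorem InInvHull.compMem [Mul M] {f g : M → Option M}
    (hg : InInvHull g) (hf : InInvHull f) : InInvHull (pcomp g f) := by
  obtain ⟨l1, h1, rfl⟩ := hf
  obtain ⟨l2, h2, rfl⟩ := hg
  refine ⟨l1 ++ l2, by simp [h1], ?_⟩
  rw [List.foldl_append]
  exact (foldl_pcomp l2 _).symm

/-! ### Injectivity and inverses -/

/-- Injectivity of a partial map on its domain. -/
def PInj (f : M → Option M) : Prop :=
  ∀ ⦃s s' t : M⦄, f s = some t → f s' = some t → s = s'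

theorem pinv_eq_some {f : M → Option M} {t s : M} (h : pinv f t = some s) :
    f s = some t := by
  unfold pinv at h
  split at h
  · next hex =>
      injection h with h2
      exact h2 ▸ hex.choose_spec
  · cases h

theorem pinv_eq_some_of_pinj {f : M → Option M} (hf : PInj f) {s t : M}
    (h : f s = some t) : pinv f t = some s := by
  unfold pinv
  split
  · next hex => exact congrArg some (hf hex.choose_spec h)
  · next hex => exact absurd ⟨s, h⟩ hex

theorem pinv_some_iff {f : M → Option M} (hf : PInj f) {s t : M} :
    pinv f t = some s ↔ f s = some t :=
  ⟨pinv_eq_some, pinv_eq_some_of_pinj hf⟩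

theorem ptransl_pinj [Mul M] [IsLeftCancelMul M] (a : M) : PInj (ptransl a) := by
  intro s s' t h h'
  injection h with h
  injection h' with h'
  exact mul_left_cancel (h.trans h'.symm)

theorem pblock_apply [Mul M] (p : M × M) (s : M) :
    pblock p s = pinv (ptransl p.2) (p.1 * s) := rfl

theorem pblock_eq_some [Mul M] [IsLeftCancelMul M] (p : M × M) (s t : M) :
    pblock p s = some t ↔ p.2 * t = p.1 * s := by
  rw [pblock_apply, pinv_some_iff (ptransl_pinj p.2)]
  unfold ptransl
  exact ⟨fun h => Option.some.inj h, fun h => congrArg some h⟩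

theorem pblock_pinj [Mul M] [IsLeftCancelMul M] (p : M × M) : PInj (pblock p) := by
  intro s s' t h h'
  rw [pblock_eq_some] at h h'
  exact mul_left_cancel (h.symm.trans h')

theorem pid_pinj : PInj (pid (M := M)) := by
  intro s s' t h h'
  injection h with h
  injection h' with h'
  rw [h, h']

theorem pcomp_pinj {f g : M → Option M} (hf : PInj f) (hg : PInj g) :
    PInj (pcomp g f) := by
  intro s s' t h h'
  simp only [pcomp] at h h'
  obtain ⟨u, hu, hgu⟩ := Option.bind_eq_some_iff.mp h
  obtain ⟨u', hu', hgu'⟩ := Option.bind_eq_some_iff.mp h'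
  cases hg hgu hgu'
  exact hf hu hu'

theorem chainF_pinj [Mul M] [IsLeftCancelMul M] (l : List (M × M)) :
    PInj (chainF l) := by
  induction l with
  | nil => exact pid_pinj
  | cons p l ih =>
      rw [chainF_cons]
      exact pcomp_pinj (pblock_pinj p) ih

theorem InInvHull.pinj [Mul M] [IsLeftCancelMul M] {f : M → Option M}
    (hf : InInvHull f) : PInj f := by
  obtain ⟨l, -, rfl⟩ := hf
  exact chainF_pinj l

theorem pinv_spec {u v : M → Option M} (huv : ∀ s t, u s = some t ↔ v t = some s) :
    pinv u = v := by
  funext t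
  unfold pinv
  split
  · next hex => exact ((huv _ _).mp hex.choose_spec).symm
  · next hex =>
      cases hv : v t with
      | none => rfl
      | some s => exact absurd ⟨s, (huv s t).mpr hv⟩ hex

theorem pinv_pid : pinv (pid (M := M)) = pid := by
  apply pinv_spec
  intro s t
  simp [pid, eq_comm]

theorem pinv_pcomp {f g : M → Option M} (hf : PInj f) (hg : PInj g) :
    pinv (pcomp g f) = pcomp (pinv f) (pinv g) := by
  apply pinv_spec
  intro s t
  constructor
  · intro h
    simp only [pcomp] at h ⊢
    obtain ⟨u, hu, hgu⟩ := Option.bind_eq_some_iff.mp h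
    rw [pinv_eq_some_of_pinj hg hgu, Option.bind_some]
    exact pinv_eq_some_of_pinj hf hu
  · intro h
    simp only [pcomp] at h ⊢
    obtain ⟨u, hu, hfu⟩ := Option.bind_eq_some_iff.mp h
    rw [pinv_eq_some hfu, Option.bind_some]
    exact pinv_eq_some hu

theorem pinv_pblock [Mul M] [IsLeftCancelMul M] (p : M × M) :
    pinv (pblock p) = pblock p.swap := by
  apply pinv_spec
  intro s t
  rw [pblock_eq_some, pblock_eq_some]
  simp only [Prod.fst_swap, Prod.snd_swap]
  exact eq_comm

theorem pinv_chainF [Mul M] [IsLeftCancelMul M] (l : List (M × M)) :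
    pinv (chainF l) = chainF (l.reverse.map Prod.swap) := by
  induction l with
  | nil => exact pinv_pid
  | cons p l ih =>
      rw [chainF_cons, pinv_pcomp (pblock_pinj p) (chainF_pinj l), pinv_pblock, ih]
      have h1 : (p :: l).reverse.map Prod.swap
          = l.reverse.map Prod.swap ++ [p.swap] := by simp
      rw [h1]
      show _ = (l.reverse.map Prod.swap ++ [p.swap]).foldl _ pid
      rw [List.foldl_append]
      rfl

theorem InInvHull.pinvMem [Mul M] [IsLeftCancelMul M] {f : M → Option M}
    (hf : InInvHull f) : InInvHull (pinv f) := by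
  obtain ⟨l, hl, rfl⟩ := hf
  refine ⟨l.reverse.map Prod.swap, ?_, pinv_chainF l⟩
  simpa using hl

/-! ### `J(M)` is closed under intersections -/

theorem IsConstructible.inter [Mul M] [IsLeftCancelMul M] {A B : Set M}
    (hA : IsConstructible A) (hB : IsConstructible B) : IsConstructible (A ∩ B) := by
  obtain ⟨f, hf, rfl⟩ := hA
  obtain ⟨g, hg, rfl⟩ := hB
  have hfi : PInj f := hf.pinj
  refine ⟨pcomp g (pcomp (pinv f) f), hg.compMem (hf.pinvMem.compMem hf), ?_⟩
  ext s
  simp only [pdom, Set.mem_inter_iff, Set.mem_setOf_eq, pcomp]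
  cases hfs : f s with
  | none => simp
  | some t =>
      rw [Option.bind_some, pinv_eq_some_of_pinj hfi hfs, Option.bind_some]
      simp

theorem PFixes.mono {g : M → Option M} {A B : Set M} (h : PFixes g A)
    (hBA : B ⊆ A) : PFixes g B :=
  fun s hs => h s (hBA hs)

/-! ### Filters of constructible ideals -/

/-- A (proper) filter of nonempty constructible right ideals. -/
def MFilter [Mul M] (F : Set (Set M)) : Prop :=
  F.Nonempty ∧ (∀ A ∈ F, IsConstructible A ∧ A.Nonempty) ∧
  (∀ A ∈ F, ∀ B ∈ F, A ∩ B ∈ F) ∧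
  (∀ A ∈ F, ∀ B : Set M, IsConstructible B → A ⊆ B → B ∈ F)

theorem exists_maximal_mfilter [Mul M] {F₀ : Set (Set M)} (h₀ : MFilter F₀) :
    ∃ F, MFilter F ∧ F₀ ⊆ F ∧ ∀ G, MFilter G → F ⊆ G → G = F := by
  have hchainub : ∀ c ⊆ {F : Set (Set M) | MFilter F}, IsChain (· ⊆ ·) c → c.Nonempty →
      ∃ ub ∈ {F : Set (Set M) | MFilter F}, ∀ s ∈ c, s ⊆ ub := by
    intro c hcS hchain hcne
    obtain ⟨F1, hF1⟩ := hcne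
    refine ⟨⋃₀ c, ⟨?_, ?_, ?_, ?_⟩, fun s hs => Set.subset_sUnion_of_mem hs⟩
    · obtain ⟨A, hA⟩ := (hcS hF1).1
      exact ⟨A, F1, hF1, hA⟩
    · rintro A ⟨F2, hF2, hA⟩
      exact (hcS hF2).2.1 A hA
    · rintro A ⟨F2, hF2, hA⟩ B ⟨F3, hF3, hB⟩
      rcases hchain.total hF2 hF3 with hle | hle
      · exact ⟨F3, hF3, (hcS hF3).2.2.1 A (hle hA) B hB⟩
      · exact ⟨F2, hF2, (hcS hF2).2.2.1 A hA B (hle hB)⟩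
    · rintro A ⟨F2, hF2, hA⟩ B hBc hAB
      exact ⟨F2, hF2, (hcS hF2).2.2.2 A hA B hBc hAB⟩
  obtain ⟨F, hsub, hmax⟩ := zorn_subset_nonempty _ hchainub F₀ h₀
  exact ⟨F, hmax.1, hsub, fun G hG hFG => (hmax.2 hG hFG).antisymm hFG⟩

theorem mfilter_mem_of_cluster [Mul M] [IsLeftCancelMul M] {F : Set (Set M)}
    (hF : MFilter F) (hmax : ∀ G, MFilter G → F ⊆ G → G = F) {A : Set M}
    (hA : IsConstructible A) (hcl : ∀ Z ∈ F, (Z ∩ A).Nonempty) : A ∈ F := by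
  set G : Set (Set M) := {B | IsConstructible B ∧ ∃ Z ∈ F, Z ∩ A ⊆ B} with hGdef
  have hFG : F ⊆ G := fun Z hZ => ⟨(hF.2.1 Z hZ).1, Z, hZ, Set.inter_subset_left⟩
  have hG : MFilter G := by
    refine ⟨hF.1.mono hFG, ?_, ?_, ?_⟩
    · rintro B ⟨hBc, Z, hZ, hsub⟩
      exact ⟨hBc, (hcl Z hZ).mono hsub⟩
    · rintro B ⟨hBc, Z, hZ, hsub⟩ B' ⟨hB'c, Z', hZ', hsub'⟩
      refine ⟨hBc.inter hB'c, Z ∩ Z', hF.2.2.1 Z hZ Z' hZ', ?_⟩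
      rintro x ⟨⟨hx1, hx2⟩, hx3⟩
      exact ⟨hsub ⟨hx1, hx3⟩, hsub' ⟨hx2, hx3⟩⟩
    · rintro B ⟨hBc, Z, hZ, hsub⟩ B' hB'c hBB'
      exact ⟨hB'c, Z, hZ, hsub.trans hBB'⟩
  have hGF : G = F := hmax G hG hFG
  obtain ⟨Z0, hZ0⟩ := hF.1
  have hAG : A ∈ G := ⟨hA, Z0, hZ0, Set.inter_subset_right⟩
  exact hGF ▸ hAG

theorem mfilter_inter_finset [Mul M] {F : Set (Set M)} (hF : MFilter F)
    {ι : Type*} {X : Set M} (hX : X ∈ F) (Z : ι → Set M) :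
    ∀ s : Finset ι, (∀ i ∈ s, Z i ∈ F) → (X ∩ ⋂ i ∈ s, Z i) ∈ F := by
  classical
  intro s
  induction s using Finset.induction_on with
  | empty => intro _; simpa using hX
  | @insert a s ha ih =>
      intro hZ
      have heq : X ∩ ⋂ i ∈ insert a s, Z i = Z a ∩ (X ∩ ⋂ i ∈ s, Z i) := by
        ext x
        simp only [Set.mem_inter_iff, Set.mem_iInter, Finset.mem_insert]
        constructor
        · rintro ⟨hx, hall⟩
          exact ⟨hall a (Or.inl rfl), hx, fun i hi => hall i (Or.inr hi)⟩
        · rintro ⟨hza, hx, hall⟩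
          refine ⟨hx, fun i hi => ?_⟩
          rcases hi with rfl | hi
          · exact hza
          · exact hall i hi
      rw [heq]
      exact hF.2.2.1 _ (hZ a (Finset.mem_insert_self a s)) _
        (ih fun i hi => hZ i (Finset.mem_insert_of_mem hi))

theorem mfilter_meets_foundation [Mul M] {F : Set (Set M)} (hF : MFilter F)
    {X : Set M} (hX : X ∈ F) {ι : Type*} [Fintype ι] {fam : ι → Set M}
    (hfound : IsFoundation X fam) : ∃ i, ∀ Z ∈ F, (Z ∩ fam i).Nonempty := by
  by_contra hcon
  have hcon' : ∀ i, ∃ Z, Z ∈ F ∧ ¬(Z ∩ fam i).Nonempty := by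
    intro i
    by_contra hi
    exact hcon ⟨i, fun Z hZ => by
      by_contra h2
      exact hi ⟨Z, hZ, h2⟩⟩
  choose Z hZF hZe using hcon'
  have hV : (X ∩ ⋂ i ∈ Finset.univ, Z i) ∈ F :=
    mfilter_inter_finset hF hX Z Finset.univ (fun i _ => hZF i)
  obtain ⟨hVc, hVne⟩ := hF.2.1 _ hV
  obtain ⟨i, x, hxV, hxf⟩ := hfound.2 _ hVc hVne Set.inter_subset_left
  have hxZ : x ∈ Z i := by
    have h := hxV.2
    simp only [Set.mem_iInter] at h
    exact h i (Finset.mem_univ i)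
  exact hZe i ⟨x, hxZ, hxf⟩

end Stmt7Aux


/-- If a left cancellative monoid `S` is C*-regular on the boundary
and for every `g ∈ I_ℓ(S)` and constructible `X, X₁, …, Xₘ` with `Xᵢ ⊆ X` such that `g`
fixes `X ∖ (X₁ ∪ ⋯ ∪ Xₘ)` pointwise there are constructible `Y₁, …, Y_l` (possibly
`l = 0`), each fixed pointwise by `g`, with `{X₁, …, Xₘ, Y₁, …, Y_l}` a foundation set
for `X`, then `S` is strongly C*-regular on the boundary. -/
theorem cstar_stmt7 {M : Type*} [Monoid M] [IsLeftCancelMul M]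
    (hreg : RegularOnBoundary M)
    (hcond : ∀ g : M → Option M, InInvHull g →
      ∀ (m : ℕ) (X : Set M) (Xi : Fin m → Set M),
        IsConstructible X → (∀ i, IsConstructible (Xi i)) → (∀ i, Xi i ⊆ X) →
        PFixes g (X \ ⋃ i, Xi i) →
        ∃ (l : ℕ) (Y : Fin l → Set M),
          (∀ j, IsConstructible (Y j)) ∧ (∀ j, PFixes g (Y j)) ∧
          IsFoundation X (Sum.elim Xi Y)) :
    StronglyRegularOnBoundary M := by
  intro n h hh m X Xi hX hXi hXiX hne hcov
  obtain ⟨l, Y, kk, hYbar, hYfix, hYfound⟩ := hreg n h hh m X Xi hX hXi hXiX hne hcov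
  have hdec : ∀ j : Fin l, ∃ (B : Set M) (mjn : ℕ) (C : Fin mjn → Set M),
      IsConstructible B ∧ (∀ i, IsConstructible (C i)) ∧ (∀ i, C i ⊆ B) ∧
      Y j = B \ ⋃ i, C i := by
    intro j
    obtain ⟨B, mjn, C, hB, hC, hEq⟩ := hYbar j
    refine ⟨B, mjn, fun i => C i ∩ B, hB, fun i => (hC i).inter hB,
      fun i => Set.inter_subset_right, ?_⟩
    rw [hEq]
    ext x
    simp only [Set.mem_diff, Set.mem_iUnion, Set.mem_inter_iff]
    constructor
    · rintro ⟨hxB, hnc⟩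
      exact ⟨hxB, fun ⟨i, hi, _⟩ => hnc ⟨i, hi⟩⟩
    · rintro ⟨hxB, hnc⟩
      exact ⟨hxB, fun ⟨i, hi⟩ => hnc ⟨i, hi, hxB⟩⟩
  choose B mj C hB hC hCB hYeq using hdec
  have happ : ∀ j : Fin l, ∃ (lj : ℕ) (W : Fin lj → Set M),
      (∀ r, IsConstructible (W r)) ∧ (∀ r, PFixes (h (kk j)) (W r)) ∧
      IsFoundation (B j) (Sum.elim (C j) W) := by
    intro j
    refine hcond (h (kk j)) (hh _) (mj j) (B j) (C j) (hB j) (hC j) (hCB j) ?_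
    rw [← hYeq j]
    exact hYfix j
  choose lj W hWc hWfix hWfound using happ
  classical
  have E := Fintype.equivFin ((j : Fin l) × Fin (lj j))
  refine ⟨Fintype.card ((j : Fin l) × Fin (lj j)),
    fun r => W (E.symm r).1 (E.symm r).2 ∩ X,
    fun r => kk (E.symm r).1,
    fun r => (hWc _ _).inter hX,
    fun r => (hWfix _ _).mono Set.inter_subset_left, ?_, ?_⟩
  · rintro (i | r)
    · exact hXiX i
    · exact Set.inter_subset_right
  · intro V hVc hVne hVX
    by_contra hcon
    have hVXi : ∀ i, ¬(V ∩ Xi i).Nonempty := fun i hi => hcon ⟨Sum.inl i, hi⟩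
    have hVW : ∀ (j : Fin l) (r : Fin (lj j)), ¬(V ∩ W j r).Nonempty := by
      intro j r hne2
      obtain ⟨x, hxV, hxW⟩ := hne2
      refine hcon ⟨Sum.inr (E ⟨j, r⟩), x, hxV, ?_⟩
      show x ∈ W (E.symm (E ⟨j, r⟩)).1 (E.symm (E ⟨j, r⟩)).2 ∩ X
      rw [Equiv.symm_apply_apply]
      exact ⟨hxW, hVX hxV⟩
    have hF0f : MFilter {A : Set M | IsConstructible A ∧ V ⊆ A} :=
      ⟨⟨V, hVc, Set.Subset.rfl⟩,
       fun A hA => ⟨hA.1, hVne.mono hA.2⟩,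
       fun A hA B hB => ⟨hA.1.inter hB.1, Set.subset_inter hA.2 hB.2⟩,
       fun A hA B hBc hAB => ⟨hBc, hA.2.trans hAB⟩⟩
    obtain ⟨F, hF, hF0F, hmax⟩ := exists_maximal_mfilter hF0f
    have hVF : V ∈ F := hF0F ⟨hVc, Set.Subset.rfl⟩
    have hXF : X ∈ F := hF0F ⟨hX, hVX⟩
    obtain ⟨i0, hcl⟩ := mfilter_meets_foundation hF hXF hYfound
    cases i0 with
    | inl i => exact hVXi i (hcl V hVF)
    | inr j =>
        have hclB : ∀ Z ∈ F, (Z ∩ B j).Nonempty := by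
          intro Z hZ
          obtain ⟨x, hx1, hx2⟩ := hcl Z hZ
          have hx2' : x ∈ Y j := hx2
          rw [hYeq j] at hx2'
          exact ⟨x, hx1, hx2'.1⟩
        have hBF : B j ∈ F := mfilter_mem_of_cluster hF hmax (hB j) hclB
        obtain ⟨i1, hcl2⟩ := mfilter_meets_foundation hF hBF (hWfound j)
        cases i1 with
        | inl i =>
            have hCF : C j i ∈ F := mfilter_mem_of_cluster hF hmax (hC j i) hcl2
            obtain ⟨x, hx1, hx2⟩ := hcl (C j i) hCF
            have hx2' : x ∈ Y j := hx2
            rw [hYeq j] at hx2'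
            exact hx2'.2 (Set.mem_iUnion.mpr ⟨i, hx1⟩)
        | inr r => exact hVW j r (hcl2 V hVF)

end SgC
end

section
/- The monoid R is left cancellative: for all r, u, v ∈ R, if r u = r v then u = v. -/
open scoped Classical

namespace SgC

variable {M : Type*}

/-! ### The monoid `R` -/

/-- Generators of the monoid `R`. -/
inductive Gen : Type
  | a : Gen
  | b : Gen
  | c : Gen
  | d : Gen
  | f : Gen
  | x : ℤ → Gen
  | y : ℤ → Gen

/-- The defining relations of the monoid `R`. -/
inductive RRel : FreeMonoid Gen → FreeMonoid Gen → Prop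
  | abx (n : ℤ) : RRel (FreeMonoid.of Gen.a * FreeMonoid.of Gen.b * FreeMonoid.of (Gen.x n))
      (FreeMonoid.of Gen.b * FreeMonoid.of (Gen.x n))
  | aby (n : ℤ) : RRel (FreeMonoid.of Gen.a * FreeMonoid.of Gen.b * FreeMonoid.of (Gen.y n))
      (FreeMonoid.of Gen.b * FreeMonoid.of (Gen.y (n + 1)))
  | cbx (n : ℤ) : RRel (FreeMonoid.of Gen.c * FreeMonoid.of Gen.b * FreeMonoid.of (Gen.x n))
      (FreeMonoid.of Gen.b * FreeMonoid.of (Gen.x (n + 1)))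
  | cby (n : ℤ) : RRel (FreeMonoid.of Gen.c * FreeMonoid.of Gen.b * FreeMonoid.of (Gen.y n))
      (FreeMonoid.of Gen.b * FreeMonoid.of (Gen.y n))
  | dbx (n : ℤ) (z : Gen) :
      RRel (FreeMonoid.of Gen.d * FreeMonoid.of Gen.b * FreeMonoid.of (Gen.x n) * FreeMonoid.of z)
        (FreeMonoid.of Gen.b * FreeMonoid.of (Gen.x n) * FreeMonoid.of z)
  | fby (n : ℤ) (z : Gen) :
      RRel (FreeMonoid.of Gen.f * FreeMonoid.of Gen.b * FreeMonoid.of (Gen.y n) * FreeMonoid.of z)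
        (FreeMonoid.of Gen.b * FreeMonoid.of (Gen.y n) * FreeMonoid.of z)

/-- The monoid `R`: the quotient of the free monoid on the generators by the congruence
generated by the defining relations. -/
def R : Type := (conGen RRel).Quotient

noncomputable instance : Monoid R := inferInstanceAs (Monoid (conGen RRel).Quotient)

/-- The quotient map from the free monoid on the generators onto `R`. -/
def qR : FreeMonoid Gen →* R := Con.mk' _

/-- The image in `R` of a generator. -/
noncomputable def gen (g : Gen) : R := qR (FreeMonoid.of g)

/-- A word contains a forbidden factor. -/
def IsForbidden (w : FreeMonoid Gen) : Prop :=
  ∃ n : ℤ,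
    w = FreeMonoid.of Gen.a * FreeMonoid.of Gen.b * FreeMonoid.of (Gen.x n) ∨
    w = FreeMonoid.of Gen.a * FreeMonoid.of Gen.b * FreeMonoid.of (Gen.y n) ∨
    w = FreeMonoid.of Gen.c * FreeMonoid.of Gen.b * FreeMonoid.of (Gen.x n) ∨
    w = FreeMonoid.of Gen.c * FreeMonoid.of Gen.b * FreeMonoid.of (Gen.y n) ∨
    w = FreeMonoid.of Gen.d * FreeMonoid.of Gen.b * FreeMonoid.of (Gen.x n) ∨
    w = FreeMonoid.of Gen.f * FreeMonoid.of Gen.b * FreeMonoid.of (Gen.y n)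

/-- A word is reduced if it contains no forbidden factor. -/
def ReducedWord (u : FreeMonoid Gen) : Prop :=
  ¬ ∃ p w s : FreeMonoid Gen, IsForbidden w ∧ u = p * w * s

/-- The prefix word `w₁ w₂ ⋯ wₙ` of an infinite word. -/
def prefixWord (w : ℕ → Gen) (n : ℕ) : FreeMonoid Gen :=
  FreeMonoid.ofList ((List.range n).map w)

/-! ### Auxiliary machinery: an action of `R` on lists of generators -/

private def actA : List Gen → List Gen
  | Gen.b :: Gen.x n :: t => Gen.b :: Gen.x n :: t
  | Gen.b :: Gen.y n :: t => Gen.b :: Gen.y (n + 1) :: t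
  | w => Gen.a :: w

private def actC : List Gen → List Gen
  | Gen.b :: Gen.x n :: t => Gen.b :: Gen.x (n + 1) :: t
  | Gen.b :: Gen.y n :: t => Gen.b :: Gen.y n :: t
  | w => Gen.c :: w

private def actD : List Gen → List Gen
  | Gen.b :: Gen.x n :: z :: t => Gen.b :: Gen.x n :: z :: t
  | w => Gen.d :: w

private def actF : List Gen → List Gen
  | Gen.b :: Gen.y n :: z :: t => Gen.b :: Gen.y n :: z :: t
  | w => Gen.f :: w

private def act : Gen → List Gen → List Gen
  | Gen.a => actA
  | Gen.c => actC
  | Gen.d => actD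
  | Gen.f => actF
  | g => (g :: ·)

private def unactA : List Gen → List Gen
  | Gen.b :: Gen.x n :: t => Gen.b :: Gen.x n :: t
  | Gen.b :: Gen.y n :: t => Gen.b :: Gen.y (n - 1) :: t
  | Gen.a :: w => w
  | w => w

private def unactC : List Gen → List Gen
  | Gen.b :: Gen.x n :: t => Gen.b :: Gen.x (n - 1) :: t
  | Gen.b :: Gen.y n :: t => Gen.b :: Gen.y n :: t
  | Gen.c :: w => w
  | w => w

private def unactD : List Gen → List Gen
  | Gen.d :: w => w
  | w => w

private def unactF : List Gen → List Gen
  | Gen.f :: w => w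
  | w => w

private lemma unactA_actA (w : List Gen) : unactA (actA w) = w := by
  unfold actA
  split <;> simp [unactA]

private lemma unactC_actC (w : List Gen) : unactC (actC w) = w := by
  unfold actC
  split <;> simp [unactC]

private lemma unactD_actD (w : List Gen) : unactD (actD w) = w := by
  unfold actD
  split <;> simp [unactD]

private lemma unactF_actF (w : List Gen) : unactF (actF w) = w := by
  unfold actF
  split <;> simp [unactF]

private lemma act_inj (g : Gen) : Function.Injective (act g) := by
  cases g
  case a => exact Function.LeftInverse.injective unactA_actA
  case c => exact Function.LeftInverse.injective unactC_actC
  case d => exact Function.LeftInverse.injective unactD_actD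
  case f => exact Function.LeftInverse.injective unactF_actF
  all_goals exact fun w1 w2 h => List.cons_injective h

private lemma act_ne_nil (g : Gen) (w : List Gen) : act g w ≠ [] := by
  cases g <;> simp only [act] <;>
    first
      | (unfold actA; split <;> simp)
      | (unfold actC; split <;> simp)
      | (unfold actD; split <;> simp)
      | (unfold actF; split <;> simp)
      | simp

private def Phi0 : FreeMonoid Gen →* Function.End (List Gen) := FreeMonoid.lift act

private lemma Phi0_rel (u v : FreeMonoid Gen) (h : RRel u v) : Phi0 u = Phi0 v := by
  cases h with
  | abx n =>
    funext w
    show act Gen.a (act Gen.b (act (Gen.x n) w)) = act Gen.b (act (Gen.x n) w)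
    simp [act, actA]
  | aby n =>
    funext w
    show act Gen.a (act Gen.b (act (Gen.y n) w)) = act Gen.b (act (Gen.y (n + 1)) w)
    simp [act, actA]
  | cbx n =>
    funext w
    show act Gen.c (act Gen.b (act (Gen.x n) w)) = act Gen.b (act (Gen.x (n + 1)) w)
    simp [act, actC]
  | cby n =>
    funext w
    show act Gen.c (act Gen.b (act (Gen.y n) w)) = act Gen.b (act (Gen.y n) w)
    simp [act, actC]
  | dbx n z =>
    funext w
    show act Gen.d (act Gen.b (act (Gen.x n) (act z w)))
        = act Gen.b (act (Gen.x n) (act z w))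
    obtain ⟨g', t', hw⟩ : ∃ g' t', act z w = g' :: t' := by
      cases hzw : act z w with
      | nil => exact absurd hzw (act_ne_nil z w)
      | cons g' t' => exact ⟨g', t', rfl⟩
    rw [hw]
    simp [act, actD]
  | fby n z =>
    funext w
    show act Gen.f (act Gen.b (act (Gen.y n) (act z w)))
        = act Gen.b (act (Gen.y n) (act z w))
    obtain ⟨g', t', hw⟩ : ∃ g' t', act z w = g' :: t' := by
      cases hzw : act z w with
      | nil => exact absurd hzw (act_ne_nil z w)
      | cons g' t' => exact ⟨g', t', rfl⟩
    rw [hw]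
    simp [act, actF]

private noncomputable def Phi : R →* Function.End (List Gen) :=
  Con.lift _ Phi0 (Con.conGen_le.2 fun x y h => (Con.ker_rel _).2 (Phi0_rel x y h))

private lemma Phi_qR (w : FreeMonoid Gen) : Phi (qR w) = Phi0 w :=
  Con.lift_mk' _ w

private lemma qR_rel {u v : FreeMonoid Gen} (h : RRel u v) : qR u = qR v :=
  (Con.eq _).2 (ConGen.Rel.of u v h)

private lemma act_qR (g : Gen) (s : List Gen) :
    qR (FreeMonoid.ofList (act g s)) = gen g * qR (FreeMonoid.ofList s) := by
  have cons_case : ∀ (g : Gen) (s : List Gen),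
      qR (FreeMonoid.ofList (g :: s)) = gen g * qR (FreeMonoid.ofList s) := by
    intro g s
    rw [FreeMonoid.ofList_cons, map_mul]
    rfl
  cases g with
  | a =>
    show qR (FreeMonoid.ofList (actA s)) = _
    unfold actA
    split
    · next n t =>
      have h := qR_rel (RRel.abx n)
      simp only [FreeMonoid.ofList_cons, map_mul, gen, ← mul_assoc] at h ⊢
      rw [h]
    · next n t =>
      have h := qR_rel (RRel.aby n)
      simp only [FreeMonoid.ofList_cons, map_mul, gen, ← mul_assoc] at h ⊢
      rw [← h]
    · exact cons_case _ _
  | c =>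
    show qR (FreeMonoid.ofList (actC s)) = _
    unfold actC
    split
    · next n t =>
      have h := qR_rel (RRel.cbx n)
      simp only [FreeMonoid.ofList_cons, map_mul, gen, ← mul_assoc] at h ⊢
      rw [← h]
    · next n t =>
      have h := qR_rel (RRel.cby n)
      simp only [FreeMonoid.ofList_cons, map_mul, gen, ← mul_assoc] at h ⊢
      rw [h]
    · exact cons_case _ _
  | d =>
    show qR (FreeMonoid.ofList (actD s)) = _
    unfold actD
    split
    · next n z t =>
      have h := qR_rel (RRel.dbx n z)
      simp only [FreeMonoid.ofList_cons, map_mul, gen, ← mul_assoc] at h ⊢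
      rw [h]
    · exact cons_case _ _
  | f =>
    show qR (FreeMonoid.ofList (actF s)) = _
    unfold actF
    split
    · next n z t =>
      have h := qR_rel (RRel.fby n z)
      simp only [FreeMonoid.ofList_cons, map_mul, gen, ← mul_assoc] at h ⊢
      rw [h]
    · exact cons_case _ _
  | b => exact cons_case _ _
  | x n => exact cons_case _ _
  | y n => exact cons_case _ _

private lemma Phi0_cons (g : Gen) (l : List Gen) (t : List Gen) :
    Phi0 (FreeMonoid.ofList (g :: l)) t = act g (Phi0 (FreeMonoid.ofList l) t) := by
  rw [FreeMonoid.ofList_cons, map_mul]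
  rfl

private lemma qR_Phi0 (l : List Gen) : ∀ t : List Gen,
    qR (FreeMonoid.ofList (Phi0 (FreeMonoid.ofList l) t)) =
      qR (FreeMonoid.ofList l) * qR (FreeMonoid.ofList t) := by
  induction l with
  | nil =>
    intro t
    simp only [FreeMonoid.ofList_nil, map_one, one_mul]
    rfl
  | cons g l ih =>
    intro t
    rw [Phi0_cons, act_qR, ih, FreeMonoid.ofList_cons, map_mul, mul_assoc]
    rfl

private lemma Phi0_inj (l : List Gen) :
    Function.Injective (Phi0 (FreeMonoid.ofList l)) := by
  induction l with
  | nil =>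
    intro t1 t2 h
    simp at h
    exact h
  | cons g l ih =>
    intro t1 t2 h
    rw [Phi0_cons, Phi0_cons] at h
    exact ih (act_inj g h)


/-- The monoid `R` is left cancellative. -/
theorem cstar_stmt12 : ∀ r u v : R, r * u = r * v → u = v := by
  have qsurj : Function.Surjective qR := Con.mk'_surjective
  intro r u v h
  obtain ⟨wr, rfl⟩ := qsurj r
  obtain ⟨wu, rfl⟩ := qsurj u
  obtain ⟨wv, rfl⟩ := qsurj v
  have h1 : Phi0 wr (Phi0 wu []) = Phi0 wr (Phi0 wv []) := by
    have h0 := congrArg Phi h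
    rw [map_mul, map_mul, Phi_qR, Phi_qR, Phi_qR] at h0
    exact congrFun h0 []
  have h2 : Phi0 wu [] = Phi0 wv [] := by
    have hi := Phi0_inj (FreeMonoid.toList wr)
    rw [FreeMonoid.ofList_toList] at hi
    exact hi h1
  have h3 := qR_Phi0 (FreeMonoid.toList wu) []
  have h4 := qR_Phi0 (FreeMonoid.toList wv) []
  rw [FreeMonoid.ofList_toList] at h3 h4
  simp only [FreeMonoid.ofList_nil, map_one, mul_one] at h3 h4
  rw [← h3, ← h4, h2]

end SgC
end
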